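/- arXiv:2104.09198 — 4 statements merged into one kernel-verified Lean document; each statement's English description precedes it below -/
import Mathlib

section
/- Let φ* : [0,∞) → [0,∞) be a convex increasing function with φ*(0)=0, arising as the Young conjugate φ*(t) = sup_{s≥0}(st − φ(s)) of φ(s) = ω(e^s), where ω satisfies ω(e·t) ≤ L(ω(t)+1) for all t ≥ 0 with some L ≥ 1. Then for every y ≥ 0, λ > 0 and n ∈ ℕ: λL^n·φ*(y/(λL^n)) + n·y ≤ λ·φ*(y/λ) + λ·(L + L² + ⋯ + L^n). -/
/-- `λL^n φ*(y/(λL^n)) + ny ≤ λφ*(y/λ) + λ(L + L² + ⋯ + L^n)` for the Young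
conjugate `φ*` of `φ(s) = ω(eˢ)`, where `ω(e·t) ≤ L(ω(t)+1)`. -/
theorem stmt3 (ω : ℝ → ℝ) (L : ℝ) (hL : 1 ≤ L)
    (hcont : Continuous ω) (hmono : Monotone ω) (hnonneg : ∀ t, 0 ≤ t → 0 ≤ ω t)
    (hα : ∀ t, 0 ≤ t → ω (Real.exp 1 * t) ≤ L * (ω t + 1))
    (hφconv : ConvexOn ℝ Set.univ fun s => ω (Real.exp s))
    (φstar : ℝ → ℝ)
    (hφstar : ∀ t, 0 ≤ t → IsLUB {y | ∃ s, 0 ≤ s ∧ y = s * t - ω (Real.exp s)} (φstar t))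
    (hconv : ConvexOn ℝ (Set.Ici 0) φstar) (hincr : MonotoneOn φstar (Set.Ici 0))
    (h0 : φstar 0 = 0) :
    ∀ y lam : ℝ, 0 ≤ y → 0 < lam → ∀ n : ℕ,
      lam * L ^ n * φstar (y / (lam * L ^ n)) + n * y ≤
        lam * φstar (y / lam) + lam * ∑ j ∈ Finset.Icc 1 n, L ^ j := by
  have hLpos : 0 < L := lt_of_lt_of_le one_pos hL
  have key : ∀ t : ℝ, 0 ≤ t → L * φstar (t / L) + t ≤ φstar t + L := by
    intro t ht
    have htL : 0 ≤ t / L := div_nonneg ht hLpos.le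
    have hub : φstar (t / L) ≤ (φstar t + L - t) / L := by
      apply (hφstar _ htL).2
      rintro z ⟨s, hs, rfl⟩
      have h1 : ω (Real.exp (s + 1)) ≤ L * (ω (Real.exp s) + 1) := by
        rw [Real.exp_add, mul_comm]
        exact hα _ (Real.exp_nonneg s)
      have h2 : (s + 1) * t - ω (Real.exp (s + 1)) ≤ φstar t :=
        (hφstar t ht).1 ⟨s + 1, by linarith, rfl⟩
      rw [le_div_iff₀ hLpos]
      have hst : s * (t / L) * L = s * t := by field_simp
      nlinarith [h1, h2]
    have h3 : L * ((φstar t + L - t) / L) = φstar t + L - t := by field_simp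
    have h4 := mul_le_mul_of_nonneg_left hub hLpos.le
    linarith
  intro y lam hy hlam n
  induction n with
  | zero => simp
  | succ n ih =>
    have hμ : 0 < lam * L ^ n := mul_pos hlam (pow_pos hLpos n)
    have hk := key (y / (lam * L ^ n)) (div_nonneg hy hμ.le)
    have hyy : lam * L ^ n * (y / (lam * L ^ n)) = y := by field_simp
    have hk2 := mul_le_mul_of_nonneg_left hk hμ.le
    have e1 : lam * L ^ (n + 1) = lam * L ^ n * L := by ring
    have e2 : y / (lam * L ^ (n + 1)) = y / (lam * L ^ n) / L := by rw [div_div, e1]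
    rw [e2, e1, Finset.sum_Icc_succ_top (Nat.le_add_left 1 n)]
    push_cast
    nlinarith [hk2, ih]
end

section
/- If a weight function ω satisfies ω(t) = o(t^a) as t → ∞ for some 0 < a ≤ 1, then for every B > 0 and λ > 0 there exists C > 0 such that B^n · n! ≤ C · exp(a·λ·φ*(n/λ)) for all n ∈ ℕ₀, where φ* is the Young conjugate of φ(s) = ω(e^s). -/
open Filter

/-- if `ω(t) = o(t^a)` at infinity for some `0 < a ≤ 1`, then for every
`B, λ > 0` there is `C > 0` with `Bⁿ n! ≤ C exp(aλφ*(n/λ))` for all `n ∈ ℕ₀`,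
`φ*` being the Young conjugate of `s ↦ ω(eˢ)`. -/
theorem stmt4 (ω : ℝ → ℝ) (a : ℝ) (ha0 : 0 < a) (ha1 : a ≤ 1)
    (hcont : Continuous ω) (hmono : Monotone ω) (hnonneg : ∀ t, 0 ≤ t → 0 ≤ ω t)
    (hφconv : ConvexOn ℝ Set.univ fun s => ω (Real.exp s))
    (hlog : (fun t => Real.log t) =o[atTop] ω)
    (hlittleo : ω =o[atTop] fun t : ℝ => t ^ a)
    (φstar : ℝ → ℝ)
    (hφstar : ∀ t, 0 ≤ t → IsLUB {y | ∃ s, 0 ≤ s ∧ y = s * t - ω (Real.exp s)} (φstar t)) :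
    ∀ B lam : ℝ, 0 < B → 0 < lam → ∃ C > 0, ∀ n : ℕ,
      B ^ n * (n.factorial : ℝ) ≤ C * Real.exp (a * lam * φstar ((n : ℝ) / lam)) := by
  intro B lam hB hlam
  set ε : ℝ := Real.log 2 / (a * lam * 2 * B) with hεdef
  have hε0 : 0 < ε := div_pos (Real.log_pos one_lt_two) (by positivity)
  have h1 := hlittleo.def hε0
  rw [eventually_atTop] at h1
  obtain ⟨T, hT⟩ := h1
  set R : ℝ := max T 1 with hRdef
  have hR1 : (1:ℝ) ≤ R := le_max_right _ _
  have hR0 : (0:ℝ) < R := lt_of_lt_of_le one_pos hR1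
  obtain ⟨N, hN⟩ := exists_nat_ge (R ^ a / (2 * B))
  set S : ℝ := ∑ n ∈ Finset.range N,
      B ^ n * (n.factorial : ℝ) / Real.exp (a * lam * φstar ((n : ℝ) / lam)) with hSdef
  have hS0 : 0 ≤ S := Finset.sum_nonneg fun i _ => by positivity
  refine ⟨1 + S, by positivity, ?_⟩
  intro n
  have hexp0 : 0 < Real.exp (a * lam * φstar ((n : ℝ) / lam)) := Real.exp_pos _
  by_cases hn : n < N
  · have hterm : B ^ n * (n.factorial : ℝ) / Real.exp (a * lam * φstar ((n : ℝ) / lam)) ≤ S :=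
      Finset.single_le_sum (f := fun i : ℕ =>
        B ^ i * (i.factorial : ℝ) / Real.exp (a * lam * φstar ((i : ℝ) / lam)))
        (fun i _ => by positivity) (Finset.mem_range.mpr hn)
    have := (div_le_iff₀ hexp0).mp (hterm.trans (by linarith : S ≤ 1 + S))
    linarith
  · push_neg at hn
    have hNn : (N : ℝ) ≤ (n : ℝ) := Nat.cast_le.mpr hn
    have h2Bn : R ^ a ≤ 2 * B * n := by
      have h1 : R ^ a ≤ 2 * B * N := by
        rw [div_le_iff₀ (by positivity)] at hN; linarith
      nlinarith
    have hRa1 : (1:ℝ) ≤ R ^ a := Real.one_le_rpow hR1 ha0.le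
    have h2Bn1 : (1:ℝ) ≤ 2 * B * n := le_trans hRa1 h2Bn
    have h2Bn0 : (0:ℝ) < 2 * B * n := lt_of_lt_of_le one_pos h2Bn1
    set s : ℝ := Real.log (2 * B * n) / a with hsdef
    have hs0 : 0 ≤ s := div_nonneg (Real.log_nonneg h2Bn1) ha0.le
    have has : a * s = Real.log (2 * B * n) := by
      rw [hsdef, mul_div_assoc', mul_div_cancel_left₀ _ ha0.ne']
    have hesa : Real.exp s ^ a = 2 * B * n := by
      rw [← Real.exp_log h2Bn0, ← has]
      rw [Real.rpow_def_of_pos (Real.exp_pos s), Real.log_exp]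
      ring_nf
    have hRes : R ≤ Real.exp s := by
      rw [← Real.exp_log hR0, Real.exp_le_exp, hsdef, le_div_iff₀ ha0]
      calc Real.log R * a = Real.log (R ^ a) := by rw [Real.log_rpow hR0]; ring
        _ ≤ Real.log (2 * B * n) := Real.log_le_log (by positivity) h2Bn
    have hTes : T ≤ Real.exp s := le_trans (le_max_left _ _) hRes
    have hωbound : ω (Real.exp s) ≤ ε * (2 * B * n) := by
      have := hT (Real.exp s) hTes
      rw [Real.norm_eq_abs, Real.norm_eq_abs] at this
      have h2 : |ω (Real.exp s)| = ω (Real.exp s) :=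
        abs_of_nonneg (hnonneg _ (Real.exp_pos s).le)
      have h3 : |Real.exp s ^ a| = 2 * B * n := by
        rw [abs_of_nonneg (Real.rpow_nonneg (Real.exp_pos s).le a), hesa]
      rw [h2, h3] at this
      exact this
    have hωn : a * lam * ω (Real.exp s) ≤ (n : ℝ) * Real.log 2 := by
      have : a * lam * (ε * (2 * B * n)) = (n : ℝ) * Real.log 2 := by
        rw [hεdef]; field_simp
      calc a * lam * ω (Real.exp s) ≤ a * lam * (ε * (2 * B * n)) :=
            mul_le_mul_of_nonneg_left hωbound (by positivity)
        _ = (n : ℝ) * Real.log 2 := this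
    have hn1 : 1 ≤ n := by
      rcases Nat.eq_zero_or_pos n with h | h
      · exfalso; rw [h] at h2Bn0; norm_num at h2Bn0
      · exact h
    have hBn0 : (0:ℝ) < B * n := by
      have : (1:ℝ) ≤ (n:ℝ) := by exact_mod_cast hn1
      nlinarith
    have hφ : s * ((n : ℝ) / lam) - ω (Real.exp s) ≤ φstar ((n : ℝ) / lam) :=
      (hφstar _ (by positivity)).1 ⟨s, hs0, rfl⟩
    have hkey : (n : ℝ) * Real.log (B * n) ≤ a * lam * φstar ((n : ℝ) / lam) := by
      have h4 : a * lam * (s * ((n : ℝ) / lam) - ω (Real.exp s))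
          = (a * s) * n - a * lam * ω (Real.exp s) := by field_simp
      have h5 : a * lam * (s * ((n : ℝ) / lam) - ω (Real.exp s))
          ≤ a * lam * φstar ((n : ℝ) / lam) := by
        apply mul_le_mul_of_nonneg_left hφ (by positivity)
      have h6 : Real.log (2 * B * n) = Real.log 2 + Real.log (B * n) := by
        rw [show (2 : ℝ) * B * n = 2 * (B * n) by ring,
          Real.log_mul (by norm_num) hBn0.ne']
      rw [h4, has, h6] at h5
      nlinarith [hωn]
    have hpow : ((B * n : ℝ)) ^ n ≤ Real.exp (a * lam * φstar ((n : ℝ) / lam)) := by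
      calc ((B * n : ℝ)) ^ n = Real.exp (Real.log (B * n)) ^ n := by
            rw [Real.exp_log hBn0]
        _ = Real.exp ((n : ℝ) * Real.log (B * n)) := by
            rw [← Real.exp_nat_mul]
        _ ≤ Real.exp (a * lam * φstar ((n : ℝ) / lam)) := Real.exp_le_exp.mpr hkey
    have hfact : (n.factorial : ℝ) ≤ (n : ℝ) ^ n := by
      exact_mod_cast Nat.factorial_le_pow n
    have hBnn : B ^ n * (n.factorial : ℝ) ≤ (B * n : ℝ) ^ n := by
      rw [mul_pow]
      exact mul_le_mul_of_nonneg_left hfact (by positivity)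
    calc B ^ n * (n.factorial : ℝ) ≤ (B * n : ℝ) ^ n := hBnn
      _ ≤ Real.exp (a * lam * φstar ((n : ℝ) / lam)) := hpow
      _ ≤ (1 + S) * Real.exp (a * lam * φstar ((n : ℝ) / lam)) :=
          le_mul_of_one_le_left hexp0.le (by linarith)
end

section
/- Let ω be a weight function satisfying ω(2t) ≤ L(ω(t)+1) for all t ≥ 0 with L ≥ 1, extended radially to vectors. Let τ ∈ ℝ and let k ∈ ℕ₀ be minimal with |τ| + |1−τ| ≤ 2^k. Then for all x, y ∈ ℝ^d: ω((x,y)) ≤ L²·ω((1−τ)x + τy) + L^{k+2}·ω(y−x) + (L + L² + ⋯ + L^{k+2}). -/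
private lemma sum_pow_step (L : ℝ) (j : ℕ) :
    ∑ i ∈ Finset.Icc 1 (j + 1), L ^ i = L * ∑ i ∈ Finset.Icc 1 j, L ^ i + L := by
  induction j with
  | zero => simp
  | succ m ihm =>
    rw [Finset.sum_Icc_succ_top (show 1 ≤ m + 1 + 1 by omega)]
    nth_rewrite 2 [Finset.sum_Icc_succ_top (show 1 ≤ m + 1 by omega)]
    rw [ihm]; ring

private lemma iter_bound (ω : ℝ → ℝ) (L : ℝ) (hL : 1 ≤ L)
    (hα : ∀ t, 0 ≤ t → ω (2 * t) ≤ L * (ω t + 1)) :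
    ∀ j : ℕ, ∀ t : ℝ, 0 ≤ t →
      ω (2 ^ j * t) ≤ L ^ j * ω t + ∑ i ∈ Finset.Icc 1 j, L ^ i := by
  intro j
  induction j with
  | zero => intro t ht; simp
  | succ j ih =>
    intro t ht
    have hL0 : (0 : ℝ) ≤ L := by linarith
    have h1 : (2 : ℝ) ^ (j + 1) * t = 2 * (2 ^ j * t) := by ring
    have h2 : ω (2 * (2 ^ j * t)) ≤ L * (ω (2 ^ j * t) + 1) :=
      hα _ (by positivity)
    have h3 := ih t ht
    rw [h1]
    calc ω (2 * (2 ^ j * t)) ≤ L * (ω (2 ^ j * t) + 1) := h2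
      _ ≤ L * (L ^ j * ω t + ∑ i ∈ Finset.Icc 1 j, L ^ i + 1) := by nlinarith
      _ = L ^ (j + 1) * ω t + (L * ∑ i ∈ Finset.Icc 1 j, L ^ i + L) := by ring
      _ = L ^ (j + 1) * ω t + ∑ i ∈ Finset.Icc 1 (j + 1), L ^ i := by
          rw [sum_pow_step]

/-- `ω((x,y)) ≤ L²ω((1−τ)x+τy) + L^{k+2}ω(y−x) + (L + ⋯ + L^{k+2})`,
where `k` is minimal with `|τ|+|1−τ| ≤ 2^k`. -/
theorem stmt6 (d : ℕ) (ω : ℝ → ℝ) (L : ℝ) (hL : 1 ≤ L) (hcont : Continuous ω)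
    (hmono : Monotone ω) (hnonneg : ∀ t, 0 ≤ t → 0 ≤ ω t)
    (hα : ∀ t, 0 ≤ t → ω (2 * t) ≤ L * (ω t + 1))
    (τ : ℝ) (k : ℕ) (hk : |τ| + |1 - τ| ≤ 2 ^ k)
    (hkmin : ∀ j : ℕ, |τ| + |1 - τ| ≤ 2 ^ j → k ≤ j) :
    ∀ x y : EuclideanSpace ℝ (Fin d),
      ω (Real.sqrt (‖x‖ ^ 2 + ‖y‖ ^ 2)) ≤
        L ^ 2 * ω ‖(1 - τ) • x + τ • y‖ + L ^ (k + 2) * ω ‖y - x‖ +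
          ∑ j ∈ Finset.Icc 1 (k + 2), L ^ j := by
  intro x y
  have hL0 : (0 : ℝ) ≤ L := by linarith
  set a : EuclideanSpace ℝ (Fin d) := (1 - τ) • x + τ • y with ha
  set b : EuclideanSpace ℝ (Fin d) := y - x with hb
  set A := ‖a‖ with hA
  set B := ‖b‖ with hB
  have hA0 : 0 ≤ A := norm_nonneg _
  have hB0 : 0 ≤ B := norm_nonneg _
  -- x = a - τ • b, y = a + (1 - τ) • b
  have hxeq : x = a - τ • b := by
    rw [ha, hb]; module
  have hyeq : y = a + (1 - τ) • b := by
    rw [ha, hb]; module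
  have hxn : ‖x‖ ≤ A + |τ| * B := by
    rw [hxeq]
    calc ‖a - τ • b‖ ≤ ‖a‖ + ‖τ • b‖ := norm_sub_le _ _
      _ = A + |τ| * B := by rw [norm_smul, Real.norm_eq_abs]
  have hyn : ‖y‖ ≤ A + |1 - τ| * B := by
    rw [hyeq]
    calc ‖a + (1 - τ) • b‖ ≤ ‖a‖ + ‖(1 - τ) • b‖ := norm_add_le _ _
      _ = A + |1 - τ| * B := by rw [norm_smul, Real.norm_eq_abs]
  -- sqrt bound
  have hsqrt : Real.sqrt (‖x‖ ^ 2 + ‖y‖ ^ 2) ≤ ‖x‖ + ‖y‖ := by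
    have h1 : ‖x‖ ^ 2 + ‖y‖ ^ 2 ≤ (‖x‖ + ‖y‖) ^ 2 := by
      nlinarith [norm_nonneg x, norm_nonneg y]
    calc Real.sqrt (‖x‖ ^ 2 + ‖y‖ ^ 2) ≤ Real.sqrt ((‖x‖ + ‖y‖) ^ 2) :=
          Real.sqrt_le_sqrt h1
      _ = ‖x‖ + ‖y‖ := by
          rw [Real.sqrt_sq (by positivity)]
  have hsum : ‖x‖ + ‖y‖ ≤ 2 * A + 2 ^ k * B := by
    have : (|τ| + |1 - τ|) * B ≤ 2 ^ k * B := by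
      apply mul_le_mul_of_nonneg_right hk hB0
    nlinarith
  set M := max (2 * A) (2 ^ k * B) with hM
  have hMle : 2 * A + 2 ^ k * B ≤ 2 * M := by
    have h1 : 2 * A ≤ M := le_max_left _ _
    have h2 : 2 ^ k * B ≤ M := le_max_right _ _
    linarith
  have hM0 : 0 ≤ M := le_trans (by positivity) (le_max_left _ _)
  have step1 : ω (Real.sqrt (‖x‖ ^ 2 + ‖y‖ ^ 2)) ≤ ω (2 * M) :=
    hmono (by linarith)
  have step2 : ω (2 * M) ≤ L * (ω M + 1) := hα M hM0
  have hωM : ω M ≤ ω (2 * A) + ω (2 ^ k * B) := by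
    rcases max_cases (2 * A) (2 ^ k * B) with ⟨h, _⟩ | ⟨h, _⟩
    · rw [hM, h]
      have := hnonneg (2 ^ k * B) (by positivity)
      linarith
    · rw [hM, h]
      have := hnonneg (2 * A) (by positivity)
      linarith
  have h2A : ω (2 * A) ≤ L * (ω A + 1) := hα A hA0
  have hkB : ω (2 ^ k * B) ≤ L ^ k * ω B + ∑ i ∈ Finset.Icc 1 k, L ^ i :=
    iter_bound ω L hL hα k B hB0
  have hωA0 : 0 ≤ ω A := hnonneg A hA0
  have hωB0 : 0 ≤ ω B := hnonneg B hB0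
  have hS0 : 0 ≤ ∑ i ∈ Finset.Icc 1 k, L ^ i :=
    Finset.sum_nonneg fun i _ => by positivity
  -- combine
  have key : ω (Real.sqrt (‖x‖ ^ 2 + ‖y‖ ^ 2)) ≤
      L ^ 2 * ω A + L ^ (k + 1) * ω B +
        (L ^ 2 + L * ∑ i ∈ Finset.Icc 1 k, L ^ i + L) := by
    have c1 : ω M ≤ L * (ω A + 1) + (L ^ k * ω B + ∑ i ∈ Finset.Icc 1 k, L ^ i) := by
      linarith
    calc ω (Real.sqrt (‖x‖ ^ 2 + ‖y‖ ^ 2)) ≤ L * (ω M + 1) := le_trans step1 step2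
      _ ≤ L * (L * (ω A + 1) + (L ^ k * ω B + ∑ i ∈ Finset.Icc 1 k, L ^ i) + 1) := by
          nlinarith
      _ = L ^ 2 * ω A + L ^ (k + 1) * ω B +
            (L ^ 2 + L * ∑ i ∈ Finset.Icc 1 k, L ^ i + L) := by ring
  have hSs1 : L * ∑ i ∈ Finset.Icc 1 k, L ^ i + L = ∑ i ∈ Finset.Icc 1 (k + 1), L ^ i :=
    (sum_pow_step L k).symm
  have hSs2 : ∑ i ∈ Finset.Icc 1 (k + 2), L ^ i
      = ∑ i ∈ Finset.Icc 1 (k + 1), L ^ i + L ^ (k + 2) := by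
    rw [Finset.sum_Icc_succ_top (by omega)]
  have hpow1 : L ^ (k + 1) ≤ L ^ (k + 2) := pow_le_pow_right₀ hL (by omega)
  have hpow2 : L ^ 2 ≤ L ^ (k + 2) := pow_le_pow_right₀ hL (by omega)
  have hωBmul : L ^ (k + 1) * ω B ≤ L ^ (k + 2) * ω B :=
    mul_le_mul_of_nonneg_right hpow1 hωB0
  calc ω (Real.sqrt (‖x‖ ^ 2 + ‖y‖ ^ 2))
      ≤ L ^ 2 * ω A + L ^ (k + 1) * ω B +
          (L ^ 2 + (L * ∑ i ∈ Finset.Icc 1 k, L ^ i + L)) := by linarith [key]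
    _ = L ^ 2 * ω A + L ^ (k + 1) * ω B +
          (L ^ 2 + ∑ i ∈ Finset.Icc 1 (k + 1), L ^ i) := by rw [hSs1]
    _ ≤ L ^ 2 * ω A + L ^ (k + 2) * ω B + ∑ i ∈ Finset.Icc 1 (k + 2), L ^ i := by
        rw [hSs2]; linarith
end

section
/- Let ω be a subadditive weight function (ω(s+t) ≤ ω(s)+ω(t)) with Young conjugate φ* of φ(s)=ω(e^s). Then for all λ > 0 and all j, k ∈ ℕ: (e^{λφ*(j/λ)}/j!)·(e^{λφ*(k/λ)}/k!) ≤ e^{λφ*((j+k)/λ)}/((j+k)!). -/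
/-- Entropy (Gibbs) inequality used below. -/
lemma gibbs_aux (x y a b : ℝ) (hx : 0 < x) (hy : 0 < y) (ha : 0 < a) (hb : 0 < b) :
    x * Real.log ((x + y) / x) + y * Real.log ((x + y) / y) ≤
      x * Real.log ((a + b) / a) + y * Real.log ((a + b) / b) := by
  have hX : 0 < x + y := by linarith
  have hT : 0 < a + b := by linarith
  have g1 : Real.log ((x + y) / x) - Real.log ((a + b) / a) ≤ (x + y) * a / (x * (a + b)) - 1 := by
    have h := Real.log_le_sub_one_of_pos (show 0 < (x + y) * a / (x * (a + b)) by positivity)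
    have e : Real.log ((x + y) * a / (x * (a + b))) =
        Real.log ((x + y) / x) - Real.log ((a + b) / a) := by
      rw [Real.log_div (by positivity) (by positivity), Real.log_mul hX.ne' ha.ne',
        Real.log_mul hx.ne' hT.ne', Real.log_div hX.ne' hx.ne', Real.log_div hT.ne' ha.ne']
      ring
    linarith [e ▸ h]
  have g2 : Real.log ((x + y) / y) - Real.log ((a + b) / b) ≤ (x + y) * b / (y * (a + b)) - 1 := by
    have h := Real.log_le_sub_one_of_pos (show 0 < (x + y) * b / (y * (a + b)) by positivity)
    have e : Real.log ((x + y) * b / (y * (a + b))) =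
        Real.log ((x + y) / y) - Real.log ((a + b) / b) := by
      rw [Real.log_div (by positivity) (by positivity), Real.log_mul hX.ne' hb.ne',
        Real.log_mul hy.ne' hT.ne', Real.log_div hX.ne' hy.ne', Real.log_div hT.ne' hb.ne']
      ring
    linarith [e ▸ h]
  have hsum : x * ((x + y) * a / (x * (a + b)) - 1) + y * ((x + y) * b / (y * (a + b)) - 1) = 0 := by
    field_simp
    ring
  nlinarith [mul_le_mul_of_nonneg_left g1 hx.le, mul_le_mul_of_nonneg_left g2 hy.le]

/-- for a subadditive weight `ω` with Young conjugate `φ*` of `s ↦ ω(eˢ)`,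
`(e^{λφ*(j/λ)}/j!)(e^{λφ*(k/λ)}/k!) ≤ e^{λφ*((j+k)/λ)}/(j+k)!` for all `λ>0`, `j,k ∈ ℕ`. -/
theorem stmt12 (ω : ℝ → ℝ) (hcont : Continuous ω) (hmono : Monotone ω)
    (h0 : ω 0 = 0) (hnonneg : ∀ t, 0 ≤ t → 0 ≤ ω t)
    (hsub : ∀ s t, 0 ≤ s → 0 ≤ t → ω (s + t) ≤ ω s + ω t)
    (hφconv : ConvexOn ℝ Set.univ fun s => ω (Real.exp s))
    (hlog : (fun t => Real.log t) =o[Filter.atTop] ω)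
    (φstar : ℝ → ℝ)
    (hφstar : ∀ t, 0 ≤ t → IsLUB {y | ∃ s, 0 ≤ s ∧ y = s * t - ω (Real.exp s)} (φstar t)) :
    ∀ lam : ℝ, 0 < lam → ∀ j k : ℕ, 1 ≤ j → 1 ≤ k →
      Real.exp (lam * φstar ((j : ℝ) / lam)) / (j.factorial : ℝ) *
          (Real.exp (lam * φstar ((k : ℝ) / lam)) / (k.factorial : ℝ)) ≤
        Real.exp (lam * φstar (((j : ℝ) + k) / lam)) / ((j + k).factorial : ℝ) := by
  intro lam hlam j k hj hk
  -- key superadditivity-with-entropy inequality for φstar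
  have key : ∀ x y : ℝ, 0 < x → 0 < y →
      φstar x + φstar y +
        (x * Real.log ((x + y) / x) + y * Real.log ((x + y) / y)) ≤ φstar (x + y) := by
    intro x y hx hy
    have hxy : (0 : ℝ) < x + y := by linarith
    set E := x * Real.log ((x + y) / x) + y * Real.log ((x + y) / y) with hE
    have main : ∀ s1 s2 : ℝ, 0 ≤ s1 → 0 ≤ s2 →
        (s1 * x - ω (Real.exp s1)) + (s2 * y - ω (Real.exp s2)) + E ≤ φstar (x + y) := by
      intro s1 s2 hs1 hs2
      set a := Real.exp s1 with hadef
      set b := Real.exp s2 with hbdef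
      have ha : 0 < a := Real.exp_pos _
      have hb : 0 < b := Real.exp_pos _
      set s := Real.log (a + b) with hsdef
      have hs0 : 0 ≤ s := Real.log_nonneg (by
        have := Real.one_le_exp hs1
        have := Real.exp_pos s2
        simp only [hadef, hbdef]; linarith)
      have hes : Real.exp s = a + b := Real.exp_log (by positivity)
      have hmem : s * (x + y) - ω (Real.exp s) ≤ φstar (x + y) :=
        (hφstar (x + y) hxy.le).1 ⟨s, hs0, rfl⟩
      have hω : ω (Real.exp s) ≤ ω a + ω b := by
        rw [hes]; exact hsub a b ha.le hb.le
      have hla : Real.log a = s1 := by rw [hadef, Real.log_exp]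
      have hlb : Real.log b = s2 := by rw [hbdef, Real.log_exp]
      have hent : E ≤ x * (s - s1) + y * (s - s2) := by
        have h1 : s - s1 = Real.log ((a + b) / a) := by
          rw [Real.log_div (by positivity) ha.ne', hsdef, hla]
        have h2 : s - s2 = Real.log ((a + b) / b) := by
          rw [Real.log_div (by positivity) hb.ne', hsdef, hlb]
        rw [h1, h2, hE]
        exact gibbs_aux x y a b hx hy ha hb
      nlinarith [hmem, hω, hent]
    have h1 : φstar x ≤ φstar (x + y) - (φstar y + E) := by
      apply (hφstar x hx.le).2
      rintro u ⟨s1, hs1, rfl⟩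
      have h2 : φstar y ≤ φstar (x + y) - ((s1 * x - ω (Real.exp s1)) + E) := by
        apply (hφstar y hy.le).2
        rintro v ⟨s2, hs2, rfl⟩
        have := main s1 s2 hs1 hs2
        linarith
      linarith
    linarith
  -- positivity basics
  have hjpos : (0 : ℝ) < (j : ℝ) := by exact_mod_cast Nat.lt_of_lt_of_le Nat.zero_lt_one hj
  have hkpos : (0 : ℝ) < (k : ℝ) := by exact_mod_cast Nat.lt_of_lt_of_le Nat.zero_lt_one hk
  have hx : (0 : ℝ) < (j : ℝ) / lam := by positivity
  have hy : (0 : ℝ) < (k : ℝ) / lam := by positivity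
  have hxyadd : (j : ℝ) / lam + (k : ℝ) / lam = ((j : ℝ) + k) / lam := by ring
  -- combinatorial bound: choose (j+k) j * j^j * k^k ≤ (j+k)^(j+k)
  have hchoose : ((j + k).choose j) * j ^ j * k ^ k ≤ (j + k) ^ (j + k) := by
    have hmem : j ∈ Finset.range (j + k + 1) := by
      simp only [Finset.mem_range]; omega
    have hterm := Finset.single_le_sum
      (f := fun i => j ^ i * k ^ (j + k - i) * ((j + k).choose i))
      (fun i _ => Nat.zero_le _) hmem
    have hjkj : j + k - j = k := by omega
    have hpow : (j + k) ^ (j + k)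
        = ∑ i ∈ Finset.range (j + k + 1), j ^ i * k ^ (j + k - i) * ((j + k).choose i) := by
      simpa using add_pow j k (j + k)
    calc ((j + k).choose j) * j ^ j * k ^ k
        = j ^ j * k ^ (j + k - j) * ((j + k).choose j) := by rw [hjkj]; ring
      _ ≤ ∑ i ∈ Finset.range (j + k + 1), j ^ i * k ^ (j + k - i) * ((j + k).choose i) := by
          simpa using hterm
      _ = (j + k) ^ (j + k) := hpow.symm
  -- real form of the combinatorial bound
  have hD : (((j + k).choose j : ℝ)) ≤
      Real.exp ((j : ℝ) * Real.log (((j : ℝ) + k) / j) + (k : ℝ) * Real.log (((j : ℝ) + k) / k)) := by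
    have hjk : (0 : ℝ) < (j : ℝ) + k := by linarith
    have hexp : Real.exp ((j : ℝ) * Real.log (((j : ℝ) + k) / j) + (k : ℝ) * Real.log (((j : ℝ) + k) / k))
        = (((j : ℝ) + k) / j) ^ j * ((((j : ℝ) + k) / k)) ^ k := by
      rw [Real.exp_add, Real.exp_nat_mul, Real.exp_nat_mul,
        Real.exp_log (by positivity), Real.exp_log (by positivity)]
    rw [hexp, div_pow, div_pow, div_mul_div_comm]
    rw [le_div_iff₀ (by positivity)]
    have hc : (((j + k).choose j : ℝ)) * ((j : ℝ) ^ j * (k : ℝ) ^ k) ≤ ((j : ℝ) + k) ^ (j + k) := by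
      have := hchoose
      have := (Nat.cast_le (α := ℝ)).2 hchoose
      push_cast at this
      nlinarith [this]
    calc (((j + k).choose j : ℝ)) * ((j : ℝ) ^ j * (k : ℝ) ^ k) ≤ ((j : ℝ) + k) ^ (j + k) := hc
      _ = (((j : ℝ) + k)) ^ j * (((j : ℝ) + k)) ^ k := by rw [pow_add]
  -- assemble
  have hkey := key ((j : ℝ) / lam) ((k : ℝ) / lam) hx hy
  rw [hxyadd] at hkey
  have e1 : (((j : ℝ) + k) / lam) / ((j : ℝ) / lam) = ((j : ℝ) + k) / j := by
    field_simp
  have e2 : (((j : ℝ) + k) / lam) / ((k : ℝ) / lam) = ((j : ℝ) + k) / k := by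
    field_simp
  rw [e1, e2] at hkey
  set L1 := Real.log (((j : ℝ) + k) / j) with hL1
  set L2 := Real.log (((j : ℝ) + k) / k) with hL2
  -- multiply hkey by lam
  have hid : lam * (φstar ((j : ℝ) / lam) + φstar ((k : ℝ) / lam)
        + ((j : ℝ) / lam * L1 + (k : ℝ) / lam * L2))
      = lam * φstar ((j : ℝ) / lam) + lam * φstar ((k : ℝ) / lam)
        + ((j : ℝ) * L1 + (k : ℝ) * L2) := by
    field_simp
  have hkey2 : lam * φstar ((j : ℝ) / lam) + lam * φstar ((k : ℝ) / lam)
      + ((j : ℝ) * L1 + (k : ℝ) * L2) ≤ lam * φstar (((j : ℝ) + k) / lam) := by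
    have h := mul_le_mul_of_nonneg_left hkey hlam.le
    rw [hid] at h
    exact h
  -- final assembly
  have hfj : (0 : ℝ) < (j.factorial : ℝ) := by exact_mod_cast j.factorial_pos
  have hfk : (0 : ℝ) < (k.factorial : ℝ) := by exact_mod_cast k.factorial_pos
  have hfjk : (0 : ℝ) < ((j + k).factorial : ℝ) := by exact_mod_cast (j + k).factorial_pos
  rw [div_mul_div_comm, div_le_div_iff₀ (by positivity) hfjk]
  have hfact : ((j + k).factorial : ℝ)
      = ((j + k).choose j : ℝ) * ((j.factorial : ℝ) * (k.factorial : ℝ)) := by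
    have h := Nat.choose_mul_factorial_mul_factorial (Nat.le_add_right j k)
    have hjkj : j + k - j = k := by omega
    rw [hjkj] at h
    exact_mod_cast (by rw [← h]; ring : ((j + k).factorial : ℕ) = (j + k).choose j * (j.factorial * k.factorial))
  rw [hfact, ← Real.exp_add]
  have step : Real.exp (lam * φstar ((j : ℝ) / lam) + lam * φstar ((k : ℝ) / lam))
      * ((j + k).choose j : ℝ) ≤ Real.exp (lam * φstar (((j : ℝ) + k) / lam)) := by
    calc Real.exp (lam * φstar ((j : ℝ) / lam) + lam * φstar ((k : ℝ) / lam))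
          * ((j + k).choose j : ℝ)
        ≤ Real.exp (lam * φstar ((j : ℝ) / lam) + lam * φstar ((k : ℝ) / lam))
          * Real.exp ((j : ℝ) * L1 + (k : ℝ) * L2) :=
          mul_le_mul_of_nonneg_left hD (Real.exp_pos _).le
      _ = Real.exp (lam * φstar ((j : ℝ) / lam) + lam * φstar ((k : ℝ) / lam)
            + ((j : ℝ) * L1 + (k : ℝ) * L2)) := by rw [← Real.exp_add]
      _ ≤ Real.exp (lam * φstar (((j : ℝ) + k) / lam)) := Real.exp_le_exp.2 hkey2
  nlinarith [mul_le_mul_of_nonneg_right step (by positivity : (0:ℝ) ≤ (j.factorial : ℝ) * (k.factorial : ℝ)), Real.exp_pos (lam * φstar ((j : ℝ) / lam) + lam * φstar ((k : ℝ) / lam))]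
end
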